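/- If P(x) = (x − x_n) * ⋯ * (x − x_1) is a factorization of a monic polynomial P ∈ ℍ[x] into linear factors, then every zero of P lies in the union of the congruence classes [x_1], …, [x_n]. -/

import Mathlib

open Polynomial

private lemma key_eval (a r : Quaternion ℝ) (h : a - r ≠ 0) (p : Polynomial (Quaternion ℝ)) :
    (p * (X - C r)).eval a = p.eval ((a - r) * a * (a - r)⁻¹) * (a - r) := by
  set b := (a - r) * a * (a - r)⁻¹ with hb
  have hba : b * (a - r) = (a - r) * a := by
    rw [hb]; rw [inv_mul_cancel_right₀ h]
  induction p using Polynomial.induction_on with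
  | C c =>
      simp [sub_mul, mul_sub, sub_mul]
  | add p q hp hq =>
      rw [add_mul, eval_add, hp, hq, eval_add, add_mul]
  | monomial m c ih =>
      have hX : C c * X ^ (m + 1) * (X - C r) = (C c * X ^ m * (X - C r)) * X := by
        rw [pow_succ, ← mul_assoc, mul_assoc (C c * X ^ m), X_mul, ← mul_assoc]
      have hX2 : C c * X ^ (m + 1) = (C c * X ^ m) * X := by
        rw [pow_succ, mul_assoc]
      rw [hX, eval_mul_X, ih, hX2, eval_mul_X, mul_assoc, ← hba, mul_assoc,
        inv_mul_cancel₀ h, mul_one, ← hba, ← mul_assoc]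

private lemma list_version (l : List (Quaternion ℝ)) (q : Quaternion ℝ)
    (hq : ((l.map fun r => X - C r).prod).eval q = 0) :
    ∃ r ∈ l, ∃ h : Quaternion ℝ, h ≠ 0 ∧ q = h * r * h⁻¹ := by
  induction l using List.reverseRecOn generalizing q with
  | nil => simp at hq
  | append_singleton l r ih =>
      rw [List.map_append, List.prod_append] at hq
      simp only [List.map_singleton, List.prod_singleton] at hq
      by_cases hqr : q - r = 0
      · refine ⟨r, by simp, 1, one_ne_zero, ?_⟩
        simp [sub_eq_zero.mp hqr]
      · rw [key_eval q r hqr] at hq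
        have h0 : ((l.map fun r => X - C r).prod).eval ((q - r) * q * (q - r)⁻¹) = 0 :=
          (mul_eq_zero.mp hq).resolve_right hqr
        obtain ⟨s, hs, h, hne, heq⟩ := ih _ h0
        refine ⟨s, by simp [hs], (q - r)⁻¹ * h, ?_, ?_⟩
        · exact mul_ne_zero (inv_ne_zero hqr) hne
        · have hkey : (q - r)⁻¹ * ((q - r) * q * (q - r)⁻¹) * (q - r) = q := by
            rw [mul_assoc, inv_mul_cancel_right₀ hqr]
            rw [← mul_assoc, inv_mul_cancel₀ hqr, one_mul]
          rw [mul_inv_rev, inv_inv]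
          conv_lhs => rw [← hkey, heq]
          simp [mul_assoc]

theorem zeros_in_union_of_classes (n : ℕ) (x : Fin n → Quaternion ℝ)
    (P : Polynomial (Quaternion ℝ))
    (hP : P = (List.ofFn fun i : Fin n => Polynomial.X - Polynomial.C (x i)).prod)
    (q : Quaternion ℝ) (hq : P.eval q = 0) :
    ∃ i : Fin n, ∃ h : Quaternion ℝ, h ≠ 0 ∧ q = h * x i * h⁻¹ := by
  have hl : (List.ofFn fun i : Fin n => X - C (x i))
      = (List.ofFn x).map fun r => X - C r := by
    rw [List.map_ofFn]; rfl
  rw [hP, hl] at hq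
  obtain ⟨r, hr, h, hne, heq⟩ := list_version _ _ hq
  obtain ⟨i, hi⟩ := List.mem_ofFn.mp hr
  exact ⟨i, h, hne, by rw [heq, hi]⟩
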